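/- Let (K,d) be a complete metric space, Y a separable real Banach space, and ι : Y → C_b(K,ℝ) a linear map whose range separates the points of K and for which there exists a real number α ≥ 0 with ‖ι(φ)‖_∞ ≤ α‖φ‖_Y for all φ ∈ Y. Then K is compact if and only if for every sequence (xₙ) in K the following are equivalent: (i) (xₙ) converges in (K,d); (ii) there exists a continuous linear functional Q : Y → ℝ such that ι(φ)(xₙ) → Q(φ) for every φ ∈ Y. -/

import Mathlib

open Filter Topology

/-- Let `(K,d)` be a complete metric space, `Y` a separable real Banach space, and
`ι : Y → C_b(K,ℝ)` a linear map whose range separates the points of `K` and with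
`‖ι φ‖_∞ ≤ α ‖φ‖`. Then `K` is compact iff for every sequence `(xₙ)` in `K`:
`(xₙ)` converges iff the Dirac functionals `δ_{xₙ}` converge weakly* in `Y*`. -/
theorem stmt_2 {K : Type*} [MetricSpace K] [CompleteSpace K]
    {Y : Type*} [NormedAddCommGroup Y] [NormedSpace ℝ Y] [CompleteSpace Y]
    [TopologicalSpace.SeparableSpace Y]
    (ι : Y →ₗ[ℝ] BoundedContinuousFunction K ℝ)
    (hsep : ∀ x y : K, x ≠ y → ∃ φ : Y, ι φ x ≠ ι φ y)
    (α : ℝ) (hα : 0 ≤ α) (hbound : ∀ φ : Y, ‖ι φ‖ ≤ α * ‖φ‖) :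
    CompactSpace K ↔
      ∀ x : ℕ → K,
        ((∃ l : K, Tendsto x atTop (𝓝 l)) ↔
          ∃ Q : Y →L[ℝ] ℝ, ∀ φ : Y, Tendsto (fun n => ι φ (x n)) atTop (𝓝 (Q φ))) := by
  have hptbound : ∀ (φ : Y) (z : K), |ι φ z| ≤ α * ‖φ‖ := fun φ z =>
    le_trans ((ι φ).norm_coe_le_norm z) (hbound φ)
  constructor
  · intro hK x
    constructor
    · rintro ⟨l, hl⟩
      refine ⟨LinearMap.mkContinuous
        { toFun := fun φ => ι φ l
          map_add' := fun a b => by simp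
          map_smul' := fun c a => by simp } α (fun φ => hptbound φ l), fun φ => ?_⟩
      exact ((ι φ).continuous.tendsto l).comp hl
    · rintro ⟨Q, hQ⟩
      obtain ⟨l, -, g, hg, hgl⟩ :=
        isCompact_univ.tendsto_subseq (x := x) (fun n => Set.mem_univ _)
      have key : ∀ φ : Y, ι φ l = Q φ := by
        intro φ
        have h1 : Tendsto (fun j => ι φ (x (g j))) atTop (𝓝 (Q φ)) :=
          (hQ φ).comp hg.tendsto_atTop
        have h2 : Tendsto (fun j => ι φ (x (g j))) atTop (𝓝 (ι φ l)) :=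
          ((ι φ).continuous.tendsto l).comp hgl
        exact tendsto_nhds_unique h2 h1
      refine ⟨l, tendsto_of_subseq_tendsto fun ns hns => ?_⟩
      obtain ⟨l', -, ms, hms, hml⟩ :=
        isCompact_univ.tendsto_subseq (x := fun n => x (ns n)) (fun n => Set.mem_univ _)
      have hll : l' = l := by
        by_contra hne
        obtain ⟨φ, hφ⟩ := hsep l' l hne
        have h1 : Tendsto (fun j => ι φ (x (ns (ms j)))) atTop (𝓝 (Q φ)) :=
          (hQ φ).comp (hns.comp hms.tendsto_atTop)
        have h2 : Tendsto (fun j => ι φ (x (ns (ms j)))) atTop (𝓝 (ι φ l')) :=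
          ((ι φ).continuous.tendsto l').comp hml
        exact hφ ((tendsto_nhds_unique h2 h1).trans (key φ).symm)
      exact ⟨ms, hll ▸ hml⟩
  · intro h
    rw [compactSpace_iff_seqCompactSpace, seqCompactSpace_iff]
    haveI : Nonempty Y := ⟨0⟩
    obtain ⟨u, hu⟩ := TopologicalSpace.exists_dense_seq Y
    intro y _
    set S : Set (ℕ → ℝ) := Set.univ.pi (fun k => Set.Icc (-(α * ‖u k‖)) (α * ‖u k‖)) with hSdef
    have hS : IsCompact S := isCompact_univ_pi fun k => isCompact_Icc
    have hmem : ∀ n, (fun k => ι (u k) (y n)) ∈ S := by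
      intro n k _
      exact abs_le.mp (hptbound (u k) (y n))
    obtain ⟨c, -, g, hg, hc⟩ := hS.isSeqCompact hmem
    rw [tendsto_pi_nhds] at hc
    -- hc : ∀ k, Tendsto (fun j => ι (u k) (y (g j))) atTop (𝓝 (c k))
    have key : ∀ φ : Y, CauchySeq fun j => ι φ (y (g j)) := by
      intro φ
      rw [Metric.cauchySeq_iff]
      intro ε hε
      have hδ : 0 < ε / (4 * (α + 1)) := by positivity
      obtain ⟨k, hk⟩ := hu.exists_dist_lt φ hδ
      have hdiff : ∀ z : K, |ι φ z - ι (u k) z| < ε / 4 := by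
        intro z
        have h1 : |ι (φ - u k) z| ≤ α * ‖φ - u k‖ := hptbound _ z
        have h2 : ‖φ - u k‖ < ε / (4 * (α + 1)) := by
          rw [← dist_eq_norm]; exact hk
        have h3 : α * ‖φ - u k‖ < ε / 4 := by
          calc α * ‖φ - u k‖ ≤ (α + 1) * ‖φ - u k‖ := by nlinarith [norm_nonneg (φ - u k)]
            _ < (α + 1) * (ε / (4 * (α + 1))) := by
                have : (0:ℝ) < α + 1 := by linarith
                exact (mul_lt_mul_iff_right₀ this).2 h2
            _ = ε / 4 := by field_simp
        have h4 : ι φ z - ι (u k) z = ι (φ - u k) z := by simp [map_sub]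
        rw [h4]; exact lt_of_le_of_lt h1 h3
      obtain ⟨N, hN⟩ := Metric.cauchySeq_iff.mp (hc k).cauchySeq (ε / 4) (by positivity)
      refine ⟨N, fun m hm n hn => ?_⟩
      have e1 := hdiff (y (g m))
      have e2 := hdiff (y (g n))
      have e3 := hN m hm n hn
      simp only [Function.comp_apply] at e3
      rw [Real.dist_eq] at e3 ⊢
      have t1 := abs_sub_le (ι φ (y (g m))) (ι (u k) (y (g m))) (ι φ (y (g n)))
      have t2 := abs_sub_le (ι (u k) (y (g m))) (ι (u k) (y (g n))) (ι φ (y (g n)))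
      have t3 : |ι (u k) (y (g n)) - ι φ (y (g n))| = |ι φ (y (g n)) - ι (u k) (y (g n))| :=
        abs_sub_comm _ _
      linarith
    have hL : ∀ φ : Y, ∃ r : ℝ, Tendsto (fun j => ι φ (y (g j))) atTop (𝓝 r) :=
      fun φ => cauchySeq_tendsto_of_complete (key φ)
    choose L hLt using hL
    have hadd : ∀ a b : Y, L (a + b) = L a + L b := by
      intro a b
      refine tendsto_nhds_unique ?_ ((hLt a).add (hLt b))
      exact (hLt (a + b)).congr (by intro j; simp [map_add])
    have hsmul : ∀ (c : ℝ) (a : Y), L (c • a) = c * L a := by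
      intro c a
      refine tendsto_nhds_unique ?_ ((hLt a).const_mul c)
      exact (hLt (c • a)).congr (by intro j; simp [map_smul])
    have hQbound : ∀ φ : Y, |L φ| ≤ α * ‖φ‖ := by
      intro φ
      have h1 : Tendsto (fun j => |ι φ (y (g j))|) atTop (𝓝 |L φ|) := (hLt φ).abs
      exact le_of_tendsto h1 (Eventually.of_forall fun j => hptbound φ _)
    set Q0 : Y →ₗ[ℝ] ℝ :=
      { toFun := L
        map_add' := hadd
        map_smul' := hsmul } with hQ0
    set Q : Y →L[ℝ] ℝ := LinearMap.mkContinuous Q0 α (fun φ => hQbound φ) with hQdef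
    obtain ⟨l, hl⟩ := (h (fun j => y (g j))).2 ⟨Q, fun φ => hLt φ⟩
    exact ⟨l, Set.mem_univ _, g, hg, hl⟩
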